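/- For the Euler-kernel approximation problem under the normalized error criterion, the problem is quasi-polynomially tractable for every nondecreasing sequence (r_k) of nonnegative integers, and the exponent of QPT is t* = 1/(r_1+1). -/

import Mathlib

open Filter Real Set

/-- Information complexity: the number of multi-indices `(j₁,…,j_d) ∈ ℕ^d`
(here 0-indexed, so `Λ k j` stands for `λ(k+1, j+1)`) whose eigenvalue product exceeds `ε²`. -/
noncomputable def infoCount (Λ : ℕ → ℕ → ℝ) (d : ℕ) (ε : ℝ) : ℕ :=
  Nat.card {j : Fin d → ℕ | ε ^ 2 < ∏ k : Fin d, Λ k.val (j k)}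

/-- Strong polynomial tractability. -/
def IsSPT (Λ : ℕ → ℕ → ℝ) : Prop :=
  ∃ C p : ℝ, 0 ≤ C ∧ 0 ≤ p ∧ ∀ d : ℕ, 1 ≤ d → ∀ ε : ℝ, ε ∈ Set.Ioo (0 : ℝ) 1 →
    (infoCount Λ d ε : ℝ) ≤ C * ε ^ (-p)

/-- The exponent `p*` of strong polynomial tractability. -/
noncomputable def sptExponent (Λ : ℕ → ℕ → ℝ) : ℝ :=
  sInf {p : ℝ | 0 ≤ p ∧ ∃ C : ℝ, 0 ≤ C ∧ ∀ d : ℕ, 1 ≤ d → ∀ ε : ℝ, ε ∈ Set.Ioo (0 : ℝ) 1 →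
    (infoCount Λ d ε : ℝ) ≤ C * ε ^ (-p)}

/-- Polynomial tractability. -/
def IsPT (Λ : ℕ → ℕ → ℝ) : Prop :=
  ∃ C p q : ℝ, 0 ≤ C ∧ 0 ≤ p ∧ 0 ≤ q ∧ ∀ d : ℕ, 1 ≤ d → ∀ ε : ℝ, ε ∈ Set.Ioo (0 : ℝ) 1 →
    (infoCount Λ d ε : ℝ) ≤ C * (d : ℝ) ^ q * ε ^ (-p)

/-- Quasi-polynomial tractability. -/
def IsQPT (Λ : ℕ → ℕ → ℝ) : Prop :=
  ∃ C t : ℝ, 0 < C ∧ 0 < t ∧ ∀ d : ℕ, 1 ≤ d → ∀ ε : ℝ, ε ∈ Set.Ioo (0 : ℝ) 1 →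
    (infoCount Λ d ε : ℝ) ≤ C * Real.exp (t * (1 + Real.log d) * (1 + Real.log ε⁻¹))

/-- The exponent `t*` of quasi-polynomial tractability. -/
noncomputable def qptExponent (Λ : ℕ → ℕ → ℝ) : ℝ :=
  sInf {t : ℝ | 0 < t ∧ ∃ C : ℝ, 0 < C ∧ ∀ d : ℕ, 1 ≤ d → ∀ ε : ℝ, ε ∈ Set.Ioo (0 : ℝ) 1 →
    (infoCount Λ d ε : ℝ) ≤ C * Real.exp (t * (1 + Real.log d) * (1 + Real.log ε⁻¹))}

/-- The filter describing `ε⁻¹ + d → ∞` over pairs `(ε, d)` with `ε ∈ (0,1)` and `d ≥ 1`. -/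
noncomputable def wtFilter : Filter (ℝ × ℕ) :=
  (Filter.comap (fun p : ℝ × ℕ => p.1⁻¹ + (p.2 : ℝ)) Filter.atTop) ⊓
    Filter.principal {p : ℝ × ℕ | p.1 ∈ Set.Ioo (0 : ℝ) 1 ∧ 1 ≤ p.2}

/-- `(s,t)`-weak tractability: `ln n(ε,d) / (ε^{-s} + d^t) → 0` as `ε⁻¹ + d → ∞`. -/
def IsWT (Λ : ℕ → ℕ → ℝ) (s t : ℝ) : Prop :=
  Filter.Tendsto
    (fun p : ℝ × ℕ => Real.log (infoCount Λ p.2 p.1) / (p.1 ^ (-s) + (p.2 : ℝ) ^ t))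
    wtFilter (nhds 0)

/-- Uniform weak tractability. -/
def IsUWT (Λ : ℕ → ℕ → ℝ) : Prop := ∀ s t : ℝ, 0 < s → 0 < t → IsWT Λ s t

/-- The problem suffers from the curse of dimensionality. -/
def SuffersCurse (Λ : ℕ → ℕ → ℝ) : Prop :=
  ∃ C ε₀ α : ℝ, 0 < C ∧ 0 < ε₀ ∧ 0 < α ∧ ∀ ε : ℝ, 0 < ε → ε ≤ ε₀ →
    {d : ℕ | C * (1 + α) ^ d ≤ (infoCount Λ d ε : ℝ)}.Infinite

/-- Condition (3) of Property (P) for a given `τ > 0`: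
`H(k,τ) = ∑_{j≥2} (λ(k,j)/λ(k,2))^τ` is finite for each `k` and
`sup_k H(k,τ) = H(1,τ)` (equivalently `H(k,τ) ≤ H(1,τ)` for all `k`). -/
def Cond3 (Λ : ℕ → ℕ → ℝ) (τ : ℝ) : Prop :=
  0 < τ ∧ (∀ k, Summable fun j : ℕ => (Λ k (j + 1) / Λ k 1) ^ τ) ∧
    ∀ k, (∑' j : ℕ, (Λ k (j + 1) / Λ k 1) ^ τ) ≤ ∑' j : ℕ, (Λ 0 (j + 1) / Λ 0 1) ^ τ

/-- `τ₀`: the infimum of all `τ` satisfying Condition (3). -/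
noncomputable def tau0 (Λ : ℕ → ℕ → ℝ) : ℝ := sInf {τ : ℝ | Cond3 Λ τ}

/-- Property (P): each sequence `λ(k,·)` is nonincreasing and nonnegative with `λ(k,1) = 1`
and `λ(k,2) > 0`, `h_k = λ(k,2)` is nonincreasing, and Condition (3) holds for some `τ > 0`. -/
structure PropertyP (Λ : ℕ → ℕ → ℝ) : Prop where
  nonneg : ∀ k j, 0 ≤ Λ k j
  anti : ∀ k, Antitone (Λ k)
  first : ∀ k, Λ k 0 = 1
  second_pos : ∀ k, 0 < Λ k 1
  h_anti : Antitone fun k => Λ k 1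
  cond3 : ∃ τ : ℝ, Cond3 Λ τ


/-- Normalized eigenvalues of the Euler-kernel problem: `λ(k,j)/λ(k,1) = (2j-1)^{-(2r_k+2)}`
(0-indexed: `eulerLam r k j = (2(j+1)-1)^{-(2 r_{k+1} + 2)}`). -/
noncomputable def eulerLam (r : ℕ → ℕ) (k j : ℕ) : ℝ :=
  ((2 * (j : ℝ) + 1) ^ (2 * r k + 2))⁻¹

namespace EulerQPT

lemma base_one_le (j : ℕ) : (1:ℝ) ≤ 2 * (j:ℝ) + 1 := by
  have : (0:ℝ) ≤ (j:ℝ) := Nat.cast_nonneg j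
  linarith

lemma eulerLam_pos (r : ℕ → ℕ) (k j : ℕ) : 0 < eulerLam r k j := by
  unfold eulerLam
  have := base_one_le j
  positivity

lemma eulerLam_le_one (r : ℕ → ℕ) (k j : ℕ) : eulerLam r k j ≤ 1 := by
  unfold eulerLam
  rw [inv_le_one_iff₀]
  right
  exact one_le_pow₀ (base_one_le j)

open Classical in
/-- the bounding finset -/
noncomputable def Fbig (r : ℕ → ℕ) (d : ℕ) (ε : ℝ) : Finset (Fin d → ℕ) :=
  (Fintype.piFinset fun _ : Fin d => Finset.range (⌊(ε^2)⁻¹⌋₊ + 1)).filter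
    fun j => ε ^ 2 < ∏ k : Fin d, eulerLam r k.val (j k)

lemma setA_subset (r : ℕ → ℕ) (d : ℕ) {ε : ℝ} (hε : 0 < ε) :
    {j : Fin d → ℕ | ε ^ 2 < ∏ k : Fin d, eulerLam r k.val (j k)} ⊆ ↑(Fbig r d ε) := by
  intro j hj
  simp only [Set.mem_setOf_eq] at hj
  simp only [Fbig, Finset.coe_filter, Set.mem_setOf_eq, Fintype.mem_piFinset,
    Finset.mem_range]
  refine ⟨fun k => ?_, hj⟩
  have h1 : ∏ k : Fin d, eulerLam r k.val (j k) ≤ eulerLam r k.val (j k) := by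
    rw [← Finset.mul_prod_erase Finset.univ _ (Finset.mem_univ k)]
    nth_rewrite 2 [← mul_one (eulerLam r k.val (j k))]
    refine mul_le_mul_of_nonneg_left ?_ (eulerLam_pos r _ _).le
    exact Finset.prod_le_one (fun i _ => (eulerLam_pos r _ _).le)
      (fun i _ => eulerLam_le_one r _ _)
  have h2 : ε ^ 2 < ((2 * ((j k : ℕ) : ℝ) + 1) ^ (2 * r k.val + 2))⁻¹ := lt_of_lt_of_le hj h1
  set X : ℝ := (2 * ((j k : ℕ) : ℝ) + 1) ^ (2 * r k.val + 2) with hXdef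
  have hX1 : (1:ℝ) ≤ X := one_le_pow₀ (base_one_le _)
  have hX : X < (ε^2)⁻¹ := by
    have := inv_strictAnti₀ (by positivity : (0:ℝ) < ε^2) h2
    rwa [inv_inv] at this
  have hjk : ((j k : ℕ) : ℝ) < (ε^2)⁻¹ := by
    have hb : (2 * ((j k : ℕ) : ℝ) + 1) ≤ X := le_self_pow₀ (base_one_le _) (by omega)
    have : ((j k : ℕ) : ℝ) ≤ 2 * ((j k : ℕ) : ℝ) + 1 := by
      have : (0:ℝ) ≤ ((j k : ℕ):ℝ) := Nat.cast_nonneg _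
      linarith
    linarith
  have : j k ≤ ⌊(ε^2)⁻¹⌋₊ := Nat.le_floor hjk.le
  omega

lemma infoCount_le (r : ℕ → ℕ) (d : ℕ) {ε : ℝ} (hε : 0 < ε) :
    (infoCount (eulerLam r) d ε : ℝ) ≤ ((Fbig r d ε).card : ℝ) := by
  have h := Nat.card_mono (Fbig r d ε).finite_toSet (setA_subset r d hε)
  have h2 : Nat.card ↑(↑(Fbig r d ε) : Set (Fin d → ℕ)) = (Fbig r d ε).card := by
    simpa using Nat.card_eq_card_finite_toFinset (Fbig r d ε).finite_toSet
  rw [h2] at h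
  exact_mod_cast h

lemma setA_finite (r : ℕ → ℕ) (d : ℕ) {ε : ℝ} (hε : 0 < ε) :
    {j : Fin d → ℕ | ε ^ 2 < ∏ k : Fin d, eulerLam r k.val (j k)}.Finite :=
  (Fbig r d ε).finite_toSet.subset (setA_subset r d hε)

lemma card_le_weighted (d M : ℕ) (w : ℕ → ℝ) (hw : ∀ v, 0 ≤ w v) {E : ℝ} (hE : 0 ≤ E)
    (F : Finset (Fin d → ℕ)) (hF : F ⊆ Fintype.piFinset fun _ : Fin d => Finset.range M)
    (h : ∀ j ∈ F, (1:ℝ) ≤ E * ∏ k : Fin d, w (j k)) :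
    (F.card : ℝ) ≤ E * (∑ v ∈ Finset.range M, w v) ^ d := by
  calc (F.card : ℝ) = ∑ _j ∈ F, (1:ℝ) := by simp
    _ ≤ ∑ j ∈ F, E * ∏ k : Fin d, w (j k) := Finset.sum_le_sum h
    _ = E * ∑ j ∈ F, ∏ k : Fin d, w (j k) := by rw [Finset.mul_sum]
    _ ≤ E * ∑ j ∈ Fintype.piFinset fun _ : Fin d => Finset.range M, ∏ k : Fin d, w (j k) := by
        refine mul_le_mul_of_nonneg_left ?_ hE
        exact Finset.sum_le_sum_of_subset_of_nonneg hF
          (fun j _ _ => Finset.prod_nonneg fun k _ => hw _)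
    _ = E * (∑ v ∈ Finset.range M, w v) ^ d := by
        rw [← Finset.prod_univ_sum]
        simp [Finset.prod_const]


-- log 3 > 1
lemma one_lt_log_three : 1 < Real.log 3 := by
  rw [Real.lt_log_iff_exp_lt (by norm_num : (0:ℝ) < 3)]
  calc rexp 1 < 2.7182818286 := Real.exp_one_lt_d9
    _ < 3 := by norm_num

-- summability of shifted p-series (nat pow 2)
lemma hsum2 : Summable (fun v : ℕ => (((v:ℝ)+1)^2)⁻¹) := by
  have h : Summable (fun n : ℕ => ((n:ℝ)^2)⁻¹) := by
    simpa [one_div] using summable_one_div_nat_pow.mpr (by norm_num : 1 < 2)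
  have h2 := (summable_nat_add_iff 1).mpr h
  simpa [Nat.cast_add] using h2

lemma hsum3 {p : ℝ} (hp : 1 < p) : Summable (fun v : ℕ => (((v:ℝ)+1) ^ p)⁻¹) := by
  have h : Summable (fun n : ℕ => ((n:ℝ) ^ p)⁻¹) := summable_nat_rpow_inv.mpr hp
  have h2 := (summable_nat_add_iff 1).mpr h
  simpa [Nat.cast_add] using h2

-- key arithmetic inequality, large d case
lemma key_ineq {A lg t D L : ℝ} (hA1 : 1 ≤ A) (hlg : 1 < lg) (htA : 1 < t*A)
    (hD0 : 0 ≤ D) (hL0 : 0 < L) (hDD : lg/(lg-1) ≤ D) :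
    2*L/A + D*L/(A*lg) ≤ t*(1+D)*(1+L) := by
  have hA0 : (0:ℝ) < A := by linarith
  have hlg0 : (0:ℝ) < lg := by linarith
  have h2 : lg ≤ D*(lg-1) := by
    rw [div_le_iff₀ (by linarith : (0:ℝ) < lg - 1)] at hDD
    linarith
  have h2L : lg*L ≤ D*(lg-1)*L := mul_le_mul_of_nonneg_right h2 hL0.le
  have hTA : 1*((1+D)*(1+L)*lg) ≤ (t*A)*((1+D)*(1+L)*lg) := by
    refine mul_le_mul_of_nonneg_right htA.le (by positivity)
  have h : 2*L*lg + D*L ≤ t*(1+D)*(1+L)*(A*lg) := by nlinarith [hTA, h2L]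
  have heq : 2*L/A + D*L/(A*lg) = (2*L*lg + D*L)/(A*lg) := by
    field_simp
  rw [heq, div_le_iff₀ (by positivity)]
  linarith [h]

variable (r : ℕ → ℕ)

-- pointwise product bound from membership
lemma prod_pow_lt {d : ℕ} {ε : ℝ} (hε : 0 < ε) (j : Fin d → ℕ)
    (hj : ε ^ 2 < ∏ k : Fin d, eulerLam r k.val (j k)) :
    ∏ k : Fin d, (2 * ((j k : ℕ) : ℝ) + 1) ^ (2 * r k.val + 2) < (ε^2)⁻¹ := by
  have h : ε ^ 2 < (∏ k : Fin d, (2 * ((j k : ℕ) : ℝ) + 1) ^ (2 * r k.val + 2))⁻¹ := by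
    rw [← Finset.prod_inv_distrib]
    exact hj
  have hpos : (0:ℝ) < ∏ k : Fin d, (2 * ((j k : ℕ) : ℝ) + 1) ^ (2 * r k.val + 2) :=
    Finset.prod_pos fun k _ => pow_pos (by linarith [base_one_le (j k)]) _
  have := inv_strictAnti₀ (by positivity : (0:ℝ) < ε^2) h
  rwa [inv_inv] at this

-- monotone exponent comparison
lemma prod_pow_ge (hr : Monotone r) {d : ℕ} (j : Fin d → ℕ) (n : ℕ) (hn : n ≤ 2 * r 0 + 2) :
    (∏ k : Fin d, (2 * ((j k : ℕ) : ℝ) + 1)) ^ n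
      ≤ ∏ k : Fin d, (2 * ((j k : ℕ) : ℝ) + 1) ^ (2 * r k.val + 2) := by
  rw [← Finset.prod_pow]
  refine Finset.prod_le_prod (fun k _ => by positivity) (fun k _ => ?_)
  refine pow_le_pow_right₀ (base_one_le _) ?_
  have := hr (Nat.zero_le k.val)
  omega

-- support-size bound
lemma supp_pow_le (hr : Monotone r) {d : ℕ} (j : Fin d → ℕ) :
    (3:ℝ) ^ ((2 * r 0 + 2) * (Finset.univ.filter fun k : Fin d => ¬ (j k = 0)).card)
      ≤ ∏ k : Fin d, (2 * ((j k : ℕ) : ℝ) + 1) ^ (2 * r k.val + 2) := by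
  classical
  calc (3:ℝ) ^ ((2 * r 0 + 2) * (Finset.univ.filter fun k : Fin d => ¬ (j k = 0)).card)
      = ∏ _k ∈ (Finset.univ.filter fun k : Fin d => ¬ (j k = 0)), (3:ℝ) ^ (2 * r 0 + 2) := by
        rw [Finset.prod_const, ← pow_mul]
    _ ≤ ∏ k ∈ (Finset.univ.filter fun k : Fin d => ¬ (j k = 0)),
          (2 * ((j k : ℕ) : ℝ) + 1) ^ (2 * r k.val + 2) := by
        refine Finset.prod_le_prod (fun k _ => by positivity) (fun k hk => ?_)
        rw [Finset.mem_filter] at hk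
        have hjk : 1 ≤ j k := Nat.one_le_iff_ne_zero.mpr hk.2
        have h3 : (3:ℝ) ≤ 2 * ((j k : ℕ) : ℝ) + 1 := by
          have : (1:ℝ) ≤ ((j k : ℕ) : ℝ) := by exact_mod_cast hjk
          linarith
        calc (3:ℝ) ^ (2 * r 0 + 2) ≤ (3:ℝ) ^ (2 * r k.val + 2) := by
              refine pow_le_pow_right₀ (by norm_num) ?_
              have := hr (Nat.zero_le k.val)
              omega
          _ ≤ (2 * ((j k : ℕ) : ℝ) + 1) ^ (2 * r k.val + 2) :=
              pow_le_pow_left₀ (by norm_num) h3 _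
    _ ≤ ∏ k : Fin d, (2 * ((j k : ℕ) : ℝ) + 1) ^ (2 * r k.val + 2) := by
        rw [← Finset.prod_filter_mul_prod_filter_not Finset.univ (fun k => ¬ j k = 0)
          (fun k => (2 * ((j k : ℕ) : ℝ) + 1) ^ (2 * r k.val + 2))]
        refine le_mul_of_one_le_right (Finset.prod_nonneg fun i _ => by positivity) ?_
        calc (1:ℝ) = ∏ _i ∈ Finset.univ.filter (fun k : Fin d => ¬¬ j k = 0), 1 := by simp
          _ ≤ ∏ i ∈ Finset.univ.filter (fun k : Fin d => ¬¬ j k = 0),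
               (2 * ((j i : ℕ) : ℝ) + 1) ^ (2 * r i.val + 2) :=
             Finset.prod_le_prod (by norm_num) (fun i _ => one_le_pow₀ (base_one_le _))


set_option maxHeartbeats 1000000 in
lemma upper (r : ℕ → ℕ) (hr : Monotone r) {t : ℝ} (ht : 1/((r 0:ℝ)+1) < t) :
    ∃ C : ℝ, 0 < C ∧ ∀ d : ℕ, 1 ≤ d → ∀ ε : ℝ, ε ∈ Set.Ioo (0:ℝ) 1 →
      (infoCount (eulerLam r) d ε : ℝ) ≤ C * Real.exp (t*(1+Real.log d)*(1+Real.log ε⁻¹)) := by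
  classical
  set a : ℕ := r 0 + 1 with ha
  have hA : ((a:ℕ) : ℝ) = (r 0 : ℝ) + 1 := by simp only [ha, Nat.cast_add, Nat.cast_one]
  have hA1 : (1:ℝ) ≤ (a:ℝ) := by
    rw [hA]
    have : (0:ℝ) ≤ (r 0:ℝ) := Nat.cast_nonneg _
    linarith
  have hA0 : (0:ℝ) < (a:ℝ) := by linarith
  have htA : 1 < t * (a:ℝ) := by
    rw [hA]
    rw [div_lt_iff₀ (by positivity : (0:ℝ) < (r 0:ℝ)+1)] at ht
    linarith
  have ht0 : 0 < t := by nlinarith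
  set lg := Real.log 3 with hlgdef
  have hlg : 1 < lg := one_lt_log_three
  set c₂ : ℝ := ∑' v:ℕ, (((v:ℝ)+1)^2)⁻¹ with hc2def
  have hc2 : 0 ≤ c₂ := tsum_nonneg (fun v => by positivity)
  set c₃ : ℝ := ∑' v:ℕ, (((v:ℝ)+1) ^ (t*((a:ℕ):ℝ)))⁻¹ with hc3def
  have hc3 : 0 ≤ c₃ := tsum_nonneg (fun v => by positivity)
  have hsum3' : Summable (fun v : ℕ => (((v:ℝ)+1) ^ (t*((a:ℕ):ℝ)))⁻¹) := hsum3 htA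
  set C₂ : ℝ := rexp (rexp (lg/(lg-1)) * Real.log (1+c₃)) with hC2def
  refine ⟨rexp c₂ + C₂, by positivity, ?_⟩
  intro d hd ε hε
  obtain ⟨hε0, hε1⟩ := hε
  have hde : (1:ℝ) ≤ (d:ℝ) := by exact_mod_cast hd
  have hd0 : (0:ℝ) < (d:ℝ) := by linarith
  have hdne : (d:ℝ) ≠ 0 := ne_of_gt hd0
  set L := Real.log ε⁻¹ with hLdef
  have hL0 : 0 < L := Real.log_pos ((one_lt_inv₀ hε0).mpr hε1)
  set D := Real.log (d:ℝ) with hDdef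
  have hD0 : 0 ≤ D := Real.log_nonneg hde
  have hexp2L : (ε^2)⁻¹ = rexp (2*L) := by
    rw [← Real.exp_log (show (0:ℝ) < (ε^2)⁻¹ by positivity)]
    congr 1
    rw [Real.log_inv, Real.log_pow, hLdef, Real.log_inv]
    push_cast; ring
  set M : ℕ := ⌊(ε^2)⁻¹⌋₊ + 1 with hMdef
  -- common: membership facts
  have hmem : ∀ j ∈ Fbig r d ε,
      (∏ k : Fin d, (2 * ((j k : ℕ) : ℝ) + 1) ^ (2 * r k.val + 2)) < rexp (2*L) := by
    intro j hj
    rw [Fbig, Finset.mem_filter] at hj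
    rw [← hexp2L]
    exact prod_pow_lt r hε0 j hj.2
  have hFsub : Fbig r d ε ⊆ Fintype.piFinset fun _ : Fin d => Finset.range M := by
    intro j hj
    rw [Fbig, Finset.mem_filter] at hj
    exact hj.1
  have hIC := infoCount_le r d hε0
  by_cases hDD : lg/(lg-1) ≤ D
  · -- large d case
    set w : ℕ → ℝ := fun v => (if v = 0 then (1:ℝ) else ((d:ℝ))⁻¹) * ((2*(v:ℝ)+1)^2)⁻¹
      with hwdef
    have hw : ∀ v, 0 ≤ w v := by
      intro v
      rw [hwdef]
      refine mul_nonneg ?_ (by positivity)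
      split <;> positivity
    set E : ℝ := rexp (2*L/(a:ℝ)) * rexp (D*L/((a:ℝ)*lg)) with hEdef
    have hE : 0 ≤ E := by positivity
    have hpoint : ∀ j ∈ Fbig r d ε, (1:ℝ) ≤ E * ∏ k : Fin d, w (j k) := by
      intro j hj
      have hP := hmem j hj
      set X : ℝ := ∏ k : Fin d, (2 * ((j k : ℕ) : ℝ) + 1)^2 with hXdef
      have hXpos : 0 < X := Finset.prod_pos fun k _ => by positivity
      have hXa : X ^ a < rexp (2*L) := by
        refine lt_of_le_of_lt ?_ hP
        have h2a : 2 * a ≤ 2 * r 0 + 2 := by omega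
        have := prod_pow_ge r hr j (2*a) (by omega)
        calc X ^ a = (∏ k : Fin d, (2 * ((j k : ℕ) : ℝ) + 1)) ^ (2*a) := by
              rw [hXdef, Finset.prod_pow, ← pow_mul]
          _ ≤ _ := this
      have hXle : X ≤ rexp (2*L/(a:ℝ)) := by
        have hex : rexp (2*L/(a:ℝ)) ^ a = rexp (2*L) := by
          rw [← Real.exp_nat_mul]
          congr 1
          field_simp
        refine (lt_of_pow_lt_pow_left₀ a (Real.exp_pos _).le ?_).le
        rw [hex]; exact hXa
      set s : ℕ := (Finset.univ.filter fun k : Fin d => ¬ (j k = 0)).card with hsdef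
      have hslog : (s:ℝ) * ((a:ℝ)*lg) ≤ L := by
        have h3 := supp_pow_le r hr j
        have h3lt : (3:ℝ) ^ ((2 * r 0 + 2) * s) < rexp (2*L) := lt_of_le_of_lt h3 hP
        have hlog := Real.log_lt_log (by positivity) h3lt
        rw [Real.log_pow, Real.log_exp] at hlog
        have hcast : (((2 * r 0 + 2) * s : ℕ) : ℝ) = 2 * (a:ℝ) * (s:ℝ) := by
          rw [hA]; push_cast; ring
        rw [hcast] at hlog
        nlinarith
      have hds : (d:ℝ)^s ≤ rexp (D*L/((a:ℝ)*lg)) := by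
        have h1 : (d:ℝ)^s = rexp ((s:ℕ) * D) := by
          rw [Real.exp_nat_mul, Real.exp_log hd0]
        rw [h1]
        refine Real.exp_le_exp.mpr ?_
        have hs' : (s:ℝ) ≤ L/((a:ℝ)*lg) := by
          rw [le_div_iff₀ (by positivity)]
          exact hslog
        calc (s:ℝ) * D ≤ (L/((a:ℝ)*lg)) * D := mul_le_mul_of_nonneg_right hs' hD0
          _ = D*L/((a:ℝ)*lg) := by ring
      have hprodw : ∏ k : Fin d, w (j k) = ((d:ℝ)⁻¹)^s * X⁻¹ := by
        rw [hwdef]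
        simp only []
        rw [Finset.prod_mul_distrib, Finset.prod_inv_distrib]
        congr 1
        rw [Finset.prod_ite (fun _ => (1:ℝ)) (fun _ => ((d:ℝ))⁻¹)]
        rw [Finset.prod_const, Finset.prod_const, one_pow, one_mul, hsdef]
      rw [hprodw, hEdef]
      have hf1 : (1:ℝ) ≤ rexp (2*L/(a:ℝ)) * X⁻¹ := by
        rw [← div_eq_mul_inv, le_div_iff₀ hXpos, one_mul]
        exact hXle
      have hf2 : (1:ℝ) ≤ rexp (D*L/((a:ℝ)*lg)) * ((d:ℝ)⁻¹)^s := by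
        rw [inv_pow, ← div_eq_mul_inv, le_div_iff₀ (by positivity), one_mul]
        exact hds
      calc (1:ℝ) = 1 * 1 := by ring
        _ ≤ (rexp (2*L/(a:ℝ)) * X⁻¹) * (rexp (D*L/((a:ℝ)*lg)) * ((d:ℝ)⁻¹)^s) :=
            mul_le_mul hf1 hf2 (by norm_num) (le_trans zero_le_one hf1)
        _ = rexp (2*L/(a:ℝ)) * rexp (D*L/((a:ℝ)*lg)) * (((d:ℝ)⁻¹)^s * X⁻¹) := by ring
    have hcard := card_le_weighted d M w hw hE (Fbig r d ε) hFsub hpoint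
    have hS : ∑ v ∈ Finset.range M, w v ≤ 1 + (d:ℝ)⁻¹ * c₂ := by
      rw [hMdef, Finset.sum_range_succ']
      have hw0 : w 0 = 1 := by rw [hwdef]; norm_num
      rw [hw0]
      have hwsucc : ∀ i : ℕ, w (i+1) = (d:ℝ)⁻¹ * ((2*((i:ℝ)+1)+1)^2)⁻¹ := by
        intro i
        rw [hwdef]
        simp only [Nat.succ_ne_zero, if_false]
        push_cast
        ring
      have : ∑ i ∈ Finset.range ⌊(ε^2)⁻¹⌋₊, w (i+1) ≤ (d:ℝ)⁻¹ * c₂ := by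
        calc ∑ i ∈ Finset.range ⌊(ε^2)⁻¹⌋₊, w (i+1)
            = (d:ℝ)⁻¹ * ∑ i ∈ Finset.range ⌊(ε^2)⁻¹⌋₊, ((2*((i:ℝ)+1)+1)^2)⁻¹ := by
              rw [Finset.mul_sum]
              exact Finset.sum_congr rfl fun i _ => hwsucc i
          _ ≤ (d:ℝ)⁻¹ * c₂ := by
              refine mul_le_mul_of_nonneg_left ?_ (by positivity)
              calc ∑ i ∈ Finset.range ⌊(ε^2)⁻¹⌋₊, ((2*((i:ℝ)+1)+1)^2)⁻¹
                  ≤ ∑ i ∈ Finset.range ⌊(ε^2)⁻¹⌋₊, (((i:ℝ)+1)^2)⁻¹ := by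
                    refine Finset.sum_le_sum fun i _ => ?_
                    refine inv_anti₀ (by positivity) ?_
                    refine pow_le_pow_left₀ (by positivity) (by linarith [Nat.cast_nonneg (α := ℝ) i]) 2
                _ ≤ c₂ := Summable.sum_le_tsum _ (fun i _ => by positivity) hsum2
      linarith
    have hSpow : (∑ v ∈ Finset.range M, w v) ^ d ≤ rexp c₂ := by
      have hS0 : 0 ≤ ∑ v ∈ Finset.range M, w v := Finset.sum_nonneg fun v _ => hw v
      have h1 : 1 + (d:ℝ)⁻¹ * c₂ ≤ rexp ((d:ℝ)⁻¹ * c₂) := by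
        have := Real.add_one_le_exp ((d:ℝ)⁻¹ * c₂)
        linarith
      calc (∑ v ∈ Finset.range M, w v) ^ d ≤ (rexp ((d:ℝ)⁻¹ * c₂)) ^ d :=
            pow_le_pow_left₀ hS0 (le_trans hS h1) d
        _ = rexp ((d:ℕ) * ((d:ℝ)⁻¹ * c₂)) := by rw [Real.exp_nat_mul]
        _ = rexp c₂ := by congr 1; field_simp
    have hkey := key_ineq hA1 hlg htA hD0 hL0 hDD
    calc (infoCount (eulerLam r) d ε : ℝ) ≤ ((Fbig r d ε).card : ℝ) := hIC
      _ ≤ E * (∑ v ∈ Finset.range M, w v) ^ d := hcard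
      _ ≤ E * rexp c₂ := by
          refine mul_le_mul_of_nonneg_left hSpow hE
      _ = rexp c₂ * rexp (2*L/(a:ℝ) + D*L/((a:ℝ)*lg)) := by
          rw [hEdef, ← Real.exp_add]; ring_nf
      _ ≤ rexp c₂ * rexp (t*(1+D)*(1+L)) := by
          refine mul_le_mul_of_nonneg_left (Real.exp_le_exp.mpr hkey) (by positivity)
      _ ≤ (rexp c₂ + C₂) * rexp (t*(1+Real.log d)*(1+Real.log ε⁻¹)) := by
          rw [← hDdef, ← hLdef]
          refine mul_le_mul_of_nonneg_right ?_ (by positivity)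
          have : 0 < C₂ := by rw [hC2def]; positivity
          linarith
  · -- small d case
    push_neg at hDD
    set w : ℕ → ℝ := fun v => ((2*(v:ℝ)+1) ^ (t*((a:ℕ):ℝ)))⁻¹ with hwdef
    have hw : ∀ v, 0 ≤ w v := by
      intro v
      rw [hwdef]
      positivity
    set E : ℝ := rexp (t*L) with hEdef
    have hE : 0 ≤ E := by positivity
    have hpoint : ∀ j ∈ Fbig r d ε, (1:ℝ) ≤ E * ∏ k : Fin d, w (j k) := by
      intro j hj
      have hP := hmem j hj
      set X : ℝ := ∏ k : Fin d, (2 * ((j k : ℕ) : ℝ) + 1) with hXdef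
      have hX1 : (1:ℝ) ≤ X := by
        calc (1:ℝ) = ∏ _k : Fin d, 1 := by simp
          _ ≤ X := Finset.prod_le_prod (by norm_num) (fun k _ => base_one_le _)
      have hX0 : (0:ℝ) < X := lt_of_lt_of_le one_pos hX1
      have hX2a : X ^ (2*a) < rexp (2*L) :=
        lt_of_le_of_lt (prod_pow_ge r hr j (2*a) (by omega)) hP
      have hXrp : X ^ (t*((a:ℕ):ℝ)) ≤ rexp (t*L) := by
        have h1 : (X ^ (2*a) : ℝ) ^ (t/2 : ℝ) ≤ (rexp (2*L)) ^ (t/2 : ℝ) :=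
          Real.rpow_le_rpow (by positivity) hX2a.le (by positivity)
        rw [← Real.rpow_natCast X (2*a), ← Real.rpow_mul hX0.le] at h1
        rw [← Real.exp_mul] at h1
        have he1 : ((2*a : ℕ) : ℝ) * (t/2) = t*((a:ℕ):ℝ) := by push_cast; ring
        have he2 : 2*L*(t/2) = t*L := by ring
        rw [he1, he2] at h1
        exact h1
      have hprodw : ∏ k : Fin d, w (j k) = (X ^ (t*((a:ℕ):ℝ)))⁻¹ := by
        rw [hwdef]
        simp only []
        rw [Finset.prod_inv_distrib]
        congr 1
        rw [hXdef]
        exact Real.finset_prod_rpow Finset.univ _ (fun k _ => by positivity) _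
      rw [hprodw, hEdef]
      rw [← div_eq_mul_inv, le_div_iff₀ (Real.rpow_pos_of_pos hX0 _), one_mul]
      exact hXrp
    have hcard := card_le_weighted d M w hw hE (Fbig r d ε) hFsub hpoint
    have hS : ∑ v ∈ Finset.range M, w v ≤ 1 + c₃ := by
      rw [hMdef, Finset.sum_range_succ']
      have hw0 : w 0 = 1 := by
        rw [hwdef]
        norm_num
      rw [hw0]
      have : ∑ i ∈ Finset.range ⌊(ε^2)⁻¹⌋₊, w (i+1) ≤ c₃ := by
        calc ∑ i ∈ Finset.range ⌊(ε^2)⁻¹⌋₊, w (i+1)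
            ≤ ∑ i ∈ Finset.range ⌊(ε^2)⁻¹⌋₊, (((i:ℝ)+1) ^ (t*((a:ℕ):ℝ)))⁻¹ := by
              refine Finset.sum_le_sum fun i _ => ?_
              rw [hwdef]
              simp only []
              refine inv_anti₀ (Real.rpow_pos_of_pos (by positivity) _) ?_
              refine Real.rpow_le_rpow (by positivity) ?_ (by positivity)
              push_cast
              linarith [Nat.cast_nonneg (α := ℝ) i]
          _ ≤ c₃ := Summable.sum_le_tsum _ (fun i _ => by positivity) hsum3'
      linarith
    have hSpow : (∑ v ∈ Finset.range M, w v) ^ d ≤ C₂ := by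
      have hS0 : 0 ≤ ∑ v ∈ Finset.range M, w v := Finset.sum_nonneg fun v _ => hw v
      have hlogc : 0 ≤ Real.log (1+c₃) := Real.log_nonneg (by linarith)
      calc (∑ v ∈ Finset.range M, w v) ^ d ≤ (1 + c₃) ^ d := pow_le_pow_left₀ hS0 hS d
        _ = rexp ((d:ℕ) * Real.log (1+c₃)) := by
            rw [Real.exp_nat_mul, Real.exp_log (by linarith : (0:ℝ) < 1 + c₃)]
        _ ≤ C₂ := by
            rw [hC2def]
            refine Real.exp_le_exp.mpr ?_
            refine mul_le_mul_of_nonneg_right ?_ hlogc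
            calc (d:ℝ) = rexp D := (Real.exp_log hd0).symm
              _ ≤ rexp (lg/(lg-1)) := Real.exp_le_exp.mpr hDD.le
    calc (infoCount (eulerLam r) d ε : ℝ) ≤ ((Fbig r d ε).card : ℝ) := hIC
      _ ≤ E * (∑ v ∈ Finset.range M, w v) ^ d := hcard
      _ ≤ E * C₂ := mul_le_mul_of_nonneg_left hSpow hE
      _ = C₂ * rexp (t*L) := by rw [hEdef]; ring
      _ ≤ C₂ * rexp (t*(1+D)*(1+L)) := by
          have hCpos : (0:ℝ) < C₂ := by rw [hC2def]; positivity
          refine mul_le_mul_of_nonneg_left (Real.exp_le_exp.mpr ?_) hCpos.le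
          nlinarith [mul_nonneg ht0.le hD0, mul_nonneg (mul_nonneg ht0.le hD0) hL0.le]
      _ ≤ (rexp c₂ + C₂) * rexp (t*(1+Real.log d)*(1+Real.log ε⁻¹)) := by
          rw [← hDdef, ← hLdef]
          refine mul_le_mul_of_nonneg_right ?_ (by positivity)
          have : (0:ℝ) < rexp c₂ := Real.exp_pos _
          linarith

set_option maxHeartbeats 1000000 in
lemma lower (r : ℕ → ℕ) {t C : ℝ} (ht : 0 < t) (hC : 0 < C)
    (hb : ∀ d : ℕ, 1 ≤ d → ∀ ε : ℝ, ε ∈ Set.Ioo (0:ℝ) 1 →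
      (infoCount (eulerLam r) d ε : ℝ) ≤ C * Real.exp (t*(1+Real.log d)*(1+Real.log ε⁻¹))) :
    1/((r 0:ℝ)+1) ≤ t := by
  by_contra hlt
  push_neg at hlt
  set a : ℕ := r 0 + 1 with ha
  have hA : ((a:ℕ) : ℝ) = (r 0 : ℝ) + 1 := by simp only [ha, Nat.cast_add, Nat.cast_one]
  have hA0 : (0:ℝ) < (a:ℝ) := by rw [hA]; positivity
  have htA : t * (a:ℝ) < 1 := by
    rw [lt_div_iff₀ (by rw [hA] at hA0; exact hA0)] at hlt
    rw [hA]; linarith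
  have key : ∀ n : ℕ, ((n:ℝ)+1) ≤ C * rexp t * ((2*(n:ℝ)+3) ^ (t*(a:ℝ))) := by
    intro n
    have hbase : (1:ℝ) < 2*(n:ℝ)+3 := by
      have : (0:ℝ) ≤ (n:ℝ) := Nat.cast_nonneg n
      linarith
    have hbase0 : (0:ℝ) < 2*(n:ℝ)+3 := by linarith
    set ε : ℝ := ((2*(n:ℝ)+3) ^ a)⁻¹ with hεdef
    have hpow1 : (1:ℝ) < (2*(n:ℝ)+3) ^ a := one_lt_pow₀ hbase (by omega)
    have hε0 : 0 < ε := by rw [hεdef]; positivity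
    have hε1 : ε < 1 := by
      rw [hεdef, inv_lt_one_iff₀]
      right; exact hpow1
    -- count lower bound
    have hsub : ∀ v : Fin (n+1),
        (fun _ : Fin 1 => (v : ℕ)) ∈ {j : Fin 1 → ℕ | ε ^ 2 < ∏ k : Fin 1, eulerLam r k.val (j k)} := by
      intro v
      simp only [Set.mem_setOf_eq, Fin.prod_univ_one]
      show ε ^ 2 < eulerLam r 0 (v : ℕ)
      have hvn : ((v:ℕ):ℝ) ≤ (n:ℝ) := by exact_mod_cast (Nat.lt_succ_iff.mp v.isLt)
      have hlt : (2*((v:ℕ):ℝ)+1) ^ (2 * r 0 + 2) < ((2*(n:ℝ)+3) ^ a) ^ 2 := by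
        rw [← pow_mul]
        have h2a : a * 2 = 2 * r 0 + 2 := by omega
        rw [h2a]
        refine pow_lt_pow_left₀ (by linarith) (by positivity) (by omega)
      rw [hεdef, eulerLam, inv_pow]
      exact inv_strictAnti₀ (by positivity) hlt
    have hfin : Finite ↥{j : Fin 1 → ℕ | ε ^ 2 < ∏ k : Fin 1, eulerLam r k.val (j k)} :=
      (setA_finite r 1 hε0).to_subtype
    have hinj : Function.Injective
        (fun v : Fin (n+1) =>
          (⟨fun _ : Fin 1 => (v : ℕ), hsub v⟩ :
            ↥{j : Fin 1 → ℕ | ε ^ 2 < ∏ k : Fin 1, eulerLam r k.val (j k)})) := by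
      intro v w hvw
      have h0 : (v:ℕ) = (w:ℕ) := congrFun (congrArg Subtype.val hvw) 0
      exact Fin.ext h0
    have hcount : (n+1 : ℕ) ≤ infoCount (eulerLam r) 1 ε := by
      have := Nat.card_le_card_of_injective _ hinj
      rw [Nat.card_eq_fintype_card, Fintype.card_fin] at this
      exact this
    have hb1 := hb 1 le_rfl ε ⟨hε0, hε1⟩
    have hlog : Real.log ε⁻¹ = (a:ℝ) * Real.log (2*(n:ℝ)+3) := by
      rw [hεdef, inv_inv, Real.log_pow]
    have hrhs : C * rexp (t*(1+Real.log (1:ℕ))*(1+Real.log ε⁻¹))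
        = C * rexp t * ((2*(n:ℝ)+3) ^ (t*(a:ℝ))) := by
      rw [Nat.cast_one, Real.log_one, add_zero, mul_one, hlog]
      rw [mul_add, mul_one, Real.exp_add, ← mul_assoc]
      congr 1
      rw [show t * ((a:ℝ) * Real.log (2*(n:ℝ)+3)) = Real.log (2*(n:ℝ)+3) * (t*(a:ℝ)) by ring]
      rw [Real.exp_mul, Real.exp_log hbase0]
    rw [hrhs] at hb1
    have : ((n:ℝ)+1) ≤ (infoCount (eulerLam r) 1 ε : ℝ) := by exact_mod_cast hcount
    linarith
  -- derive contradiction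
  set K : ℝ := C * rexp t * (3:ℝ) ^ (t*(a:ℝ)) with hKdef
  have hK0 : 0 < K := by
    rw [hKdef]
    positivity
  have key2 : ∀ n : ℕ, ((n:ℝ)+1) ^ (1 - t*(a:ℝ)) ≤ K := by
    intro n
    have hn1 : (0:ℝ) < (n:ℝ)+1 := by positivity
    have h23 : (2*(n:ℝ)+3) ≤ 3*((n:ℝ)+1) := by
      have : (0:ℝ) ≤ (n:ℝ) := Nat.cast_nonneg n
      linarith
    have htA0 : 0 ≤ t*(a:ℝ) := by positivity
    have h1 : ((2*(n:ℝ)+3) ^ (t*(a:ℝ))) ≤ (3:ℝ) ^ (t*(a:ℝ)) * ((n:ℝ)+1) ^ (t*(a:ℝ)) := by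
      rw [← Real.mul_rpow (by norm_num) hn1.le]
      exact Real.rpow_le_rpow (by positivity) h23 htA0
    have h2 : ((n:ℝ)+1) ≤ K * ((n:ℝ)+1) ^ (t*(a:ℝ)) := by
      calc ((n:ℝ)+1) ≤ C * rexp t * ((2*(n:ℝ)+3) ^ (t*(a:ℝ))) := key n
        _ ≤ C * rexp t * ((3:ℝ) ^ (t*(a:ℝ)) * ((n:ℝ)+1) ^ (t*(a:ℝ))) := by
            refine mul_le_mul_of_nonneg_left h1 (by positivity)
        _ = K * ((n:ℝ)+1) ^ (t*(a:ℝ)) := by rw [hKdef]; ring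
    have h3 : ((n:ℝ)+1) ^ (1 - t*(a:ℝ)) = ((n:ℝ)+1) / ((n:ℝ)+1) ^ (t*(a:ℝ)) := by
      rw [eq_div_iff (ne_of_gt (Real.rpow_pos_of_pos hn1 _))]
      rw [← Real.rpow_add hn1, sub_add_cancel, Real.rpow_one]
    rw [h3, div_le_iff₀ (Real.rpow_pos_of_pos hn1 _)]
    linarith [h2]
  have hexp : 0 < 1 - t*(a:ℝ) := by linarith
  have htend : Filter.Tendsto (fun n : ℕ => ((n:ℝ)+1) ^ (1 - t*(a:ℝ))) Filter.atTop Filter.atTop := by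
    refine (tendsto_rpow_atTop hexp).comp ?_
    exact Filter.tendsto_atTop_add_const_right _ 1 tendsto_natCast_atTop_atTop
  obtain ⟨n, hn⟩ := (htend.eventually (Filter.eventually_gt_atTop K)).exists
  exact absurd (key2 n) (not_le.mpr hn)

end EulerQPT

/-- Euler kernels, normalized error criterion: QPT holds for every nondecreasing sequence
`(r_k)`, with exponent of QPT equal to `1/(r₁+1)`. -/


theorem euler_qpt (r : ℕ → ℕ) (hr : Monotone r) :
    IsQPT (eulerLam r) ∧ qptExponent (eulerLam r) = 1 / ((r 0 : ℝ) + 1) := by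
  have hpos : (0:ℝ) < 1 / ((r 0 : ℝ) + 1) := by positivity
  have hmemS : ∀ t : ℝ, 1 / ((r 0 : ℝ) + 1) < t →
      t ∈ {t : ℝ | 0 < t ∧ ∃ C : ℝ, 0 < C ∧ ∀ d : ℕ, 1 ≤ d → ∀ ε : ℝ, ε ∈ Set.Ioo (0 : ℝ) 1 →
        (infoCount (eulerLam r) d ε : ℝ) ≤ C * Real.exp (t * (1 + Real.log d) * (1 + Real.log ε⁻¹))} := by
    intro t ht'
    exact ⟨lt_trans hpos ht', EulerQPT.upper r hr ht'⟩
  have hlowS : ∀ t ∈ {t : ℝ | 0 < t ∧ ∃ C : ℝ, 0 < C ∧ ∀ d : ℕ, 1 ≤ d → ∀ ε : ℝ, ε ∈ Set.Ioo (0 : ℝ) 1 →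
      (infoCount (eulerLam r) d ε : ℝ) ≤ C * Real.exp (t * (1 + Real.log d) * (1 + Real.log ε⁻¹))},
      1 / ((r 0 : ℝ) + 1) ≤ t := by
    rintro t ⟨ht0, C, hC, hb⟩
    exact EulerQPT.lower r ht0 hC hb
  constructor
  · obtain ⟨ht0, C, hC, hb⟩ := hmemS (1 / ((r 0 : ℝ) + 1) + 1) (by linarith)
    exact ⟨C, 1 / ((r 0 : ℝ) + 1) + 1, hC, ht0, hb⟩
  · rw [qptExponent]
    apply le_antisymm
    · refine le_of_forall_pos_le_add ?_
      intro η hη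
      exact csInf_le ⟨1 / ((r 0 : ℝ) + 1), fun t ht => hlowS t ht⟩ (hmemS _ (by linarith))
    · exact le_csInf ⟨1 / ((r 0 : ℝ) + 1) + 1, hmemS _ (by linarith)⟩ hlowS
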